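/- In a PET, if p + q is defined and both p and p + q are sharp, then q is sharp. -/
import Mathlib


universe u v

/-- An effect algebra: a set with a partially defined commutative associative
addition (encoded via `Option`), a zero, a one, such that `x + 0 = x`,
`x + 1` defined implies `x = 0`, and every element has a unique complement. -/
structure EffectAlgebra (E : Type u) where
  add : E → E → Option E
  zero : E
  one : E
  add_comm' : ∀ x y, add x y = add y x
  add_assoc' : ∀ x y z xy xyz, add x y = some xy → add xy z = some xyz →
      ∃ yz, add y z = some yz ∧ add x yz = some xyz
  add_zero' : ∀ x, add x zero = some x
  one_max : ∀ x y, add x one = some y → x = zero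
  compl_exists : ∀ x, ∃ y, add x y = some one
  compl_unique : ∀ x y₁ y₂, add x y₁ = some one → add x y₂ = some one → y₁ = y₂

namespace EffectAlgebra

variable {E : Type u} (a : EffectAlgebra E)

/-- The natural order: `x ≤ y` iff there is `z` with `x + z = y`. -/
def le (x y : E) : Prop := ∃ z, a.add x z = some y

/-- The complement `x⊥`: the unique element with `x + x⊥ = 1`. -/
noncomputable def compl (x : E) : E := Classical.choose (a.compl_exists x)

theorem compl_spec (x : E) : a.add x (a.compl x) = some a.one :=
  Classical.choose_spec (a.compl_exists x)

end EffectAlgebra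

open CategoryTheory

/-- An effect theory: a category with a designated trivial system `I` such
that each `Eff(A) := Hom(A, I)` is an effect algebra and precomposition
preserves zero and partial sums. -/
structure EffectTheory (C : Type u) [Category.{v} C] where
  I : C
  ea : ∀ A : C, EffectAlgebra (A ⟶ I)
  comp_zero : ∀ {A B : C} (g : B ⟶ A), g ≫ (ea A).zero = (ea B).zero
  comp_add : ∀ {A B : C} (g : B ⟶ A) (p q s : A ⟶ I),
      (ea A).add p q = some s → (ea B).add (g ≫ p) (g ≫ q) = some (g ≫ s)

namespace EffectTheory

variable {C : Type u} [Category.{v} C] (E : EffectTheory C)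

/-- `q` is the image of `f`: the least effect with `q ∘ f = 1 ∘ f`. -/
def IsImage {A B : C} (f : A ⟶ B) (q : B ⟶ E.I) : Prop :=
  f ≫ q = f ≫ (E.ea B).one ∧
    ∀ r : B ⟶ E.I, f ≫ r = f ≫ (E.ea B).one → (E.ea B).le q r

/-- An effect is sharp when it is the image of some map. -/
def Sharp {A : C} (q : A ⟶ E.I) : Prop := ∃ (B : C) (f : B ⟶ A), E.IsImage f q

/-- `π` is a compression for the effect `q`: `1 ∘ π = q ∘ π`, and `π` is final
with this property. -/
def IsCompression {B A : C} (π : B ⟶ A) (q : A ⟶ E.I) : Prop :=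
  π ≫ (E.ea A).one = π ≫ q ∧
    ∀ {D : C} (f : D ⟶ A), f ≫ (E.ea A).one = f ≫ q → ∃! g : D ⟶ B, f = g ≫ π

/-- `ξ` is a filter for the effect `q`: `1 ∘ ξ ≤ q`, and `ξ` is initial with
this property. -/
def IsFilter {A B : C} (ξ : A ⟶ B) (q : A ⟶ E.I) : Prop :=
  (E.ea A).le (ξ ≫ (E.ea B).one) q ∧
    ∀ {D : C} (f : A ⟶ D), (E.ea A).le (f ≫ (E.ea D).one) q → ∃! g : B ⟶ D, f = ξ ≫ g

/-- A map is pure when it is a filter followed by a compression. -/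
def Pure {A B : C} (f : A ⟶ B) : Prop :=
  ∃ (D : C) (q : A ⟶ E.I) (r : B ⟶ E.I) (ξ : A ⟶ D) (π : D ⟶ B),
    E.IsFilter ξ q ∧ E.IsCompression π r ∧ f = ξ ≫ π

end EffectTheory

/-- A pure effect theory (PET): an effect theory in which every effect has a
filter and a compression, every map has an image, the negation of a sharp
effect is sharp, the pure maps form a dagger category, filters and
compressions of sharp effects are adjoint, and compressions of sharp effects
are isometries. -/
structure PET {C : Type u} [Category.{v} C] (E : EffectTheory C) where
  compObj : ∀ {A : C}, (A ⟶ E.I) → C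
  compr : ∀ {A : C} (q : A ⟶ E.I), compObj q ⟶ A
  compr_is : ∀ {A : C} (q : A ⟶ E.I), E.IsCompression (compr q) q
  filtObj : ∀ {A : C}, (A ⟶ E.I) → C
  filt : ∀ {A : C} (q : A ⟶ E.I), A ⟶ filtObj q
  filt_is : ∀ {A : C} (q : A ⟶ E.I), E.IsFilter (filt q) q
  im : ∀ {A B : C}, (A ⟶ B) → (B ⟶ E.I)
  im_is : ∀ {A B : C} (f : A ⟶ B), E.IsImage f (im f)
  dag : ∀ {A B : C}, (A ⟶ B) → (B ⟶ A)
  pure_id : ∀ A : C, E.Pure (𝟙 A)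
  pure_comp : ∀ {A B D : C} (f : A ⟶ B) (g : B ⟶ D), E.Pure f → E.Pure g → E.Pure (f ≫ g)
  pure_dag : ∀ {A B : C} (f : A ⟶ B), E.Pure f → E.Pure (dag f)
  dag_dag : ∀ {A B : C} (f : A ⟶ B), E.Pure f → dag (dag f) = f
  dag_id : ∀ A : C, dag (𝟙 A) = 𝟙 A
  dag_comp : ∀ {A B D : C} (f : A ⟶ B) (g : B ⟶ D), E.Pure f → E.Pure g →
      dag (f ≫ g) = dag g ≫ dag f
  sharp_compl : ∀ {A : C} (q : A ⟶ E.I), E.Sharp q → E.Sharp ((E.ea A).compl q)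
  dag_compr_filt : ∀ {A B : C} (π : B ⟶ A) (q : A ⟶ E.I), E.Sharp q →
      E.IsCompression π q → E.IsFilter (dag π) q
  dag_filt_compr : ∀ {A B : C} (ξ : A ⟶ B) (q : A ⟶ E.I), E.Sharp q →
      E.IsFilter ξ q → E.IsCompression (dag ξ) q
  compr_isometry : ∀ {A B : C} (π : B ⟶ A) (q : A ⟶ E.I), E.Sharp q →
      E.IsCompression π q → π ≫ dag π = 𝟙 B

namespace PET

variable {C : Type u} [Category.{v} C] {E : EffectTheory C} (P : PET E)

/-- The assert map of an effect `p`: `asrt_p := π_p ∘ π_p†`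
(in diagrammatic order, `π_p†` followed by `π_p`). -/
def asrt {A : C} (p : A ⟶ E.I) : A ⟶ A := P.dag (P.compr p) ≫ P.compr p

end PET

section Aux

variable {C : Type u} [Category.{v} C] {E : EffectTheory C}

/-- A compression of a sharp effect is an image witness for that effect. -/
theorem isImage_of_compression {A B : C} {π : B ⟶ A} {c : A ⟶ E.I}
    (hc : E.Sharp c) (hπ : E.IsCompression π c) : E.IsImage π c := by
  obtain ⟨B₀, g, hg1, hg2⟩ := hc
  refine ⟨hπ.1.symm, ?_⟩
  intro r hr
  obtain ⟨h, hh, -⟩ := hπ.2 g hg1.symm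
  apply hg2
  rw [hh, Category.assoc, hr, ← Category.assoc]

/-- A compression of a sharp effect is unital. -/
theorem comp_one_of_compression (P : PET E) {A B : C} {π : B ⟶ A} {c : A ⟶ E.I}
    (hc : E.Sharp c) (hπ : E.IsCompression π c) :
    π ≫ (E.ea A).one = (E.ea B).one := by
  obtain ⟨t, ht⟩ := (P.dag_compr_filt π c hc hπ).1
  have hiso := P.compr_isometry π c hc hπ
  have hadd := E.comp_add π _ t c ht
  have h1 : π ≫ (P.dag π ≫ (E.ea B).one) = (E.ea B).one := by
    rw [← Category.assoc, hiso, Category.id_comp]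
  rw [h1] at hadd
  have h0 : π ≫ t = (E.ea B).zero :=
    (E.ea B).one_max _ _ (((E.ea B).add_comm' _ _).trans hadd)
  rw [h0] at hadd
  rw [hπ.1]
  exact (Option.some.inj (((E.ea B).add_zero' _).symm.trans hadd)).symm

/-- Sum of two summable sharp effects is sharp. -/
theorem sharp_add_of_sharp (P : PET E) {A : C} (p q t : A ⟶ E.I)
    (h : (E.ea A).add p q = some t) (hp : E.Sharp p) (hq : E.Sharp q) :
    E.Sharp t := by
  have hπt := P.compr_is t
  have hπp := P.compr_is p
  have hπq := P.compr_is q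
  set πt := P.compr t
  set πp := P.compr p
  set πq := P.compr q
  have hone_p : πp ≫ (E.ea A).one = (E.ea _).one :=
    comp_one_of_compression P hp hπp
  have hone_q : πq ≫ (E.ea A).one = (E.ea _).one :=
    comp_one_of_compression P hq hπq
  have hpp : πp ≫ p = (E.ea _).one := hπp.1.symm.trans hone_p
  have hqq : πq ≫ q = (E.ea _).one := hπq.1.symm.trans hone_q
  -- p-side
  have haddp := E.comp_add πp p q t h
  rw [hpp] at haddp
  have hpq0 : πp ≫ q = (E.ea _).zero :=
    (E.ea _).one_max _ _ (((E.ea _).add_comm' _ _).trans haddp)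
  rw [hpq0] at haddp
  have hpt : πp ≫ t = (E.ea _).one :=
    (Option.some.inj (((E.ea _).add_zero' _).symm.trans haddp)).symm
  obtain ⟨hp', hhp', -⟩ := hπt.2 πp (by rw [hone_p, hpt])
  -- q-side
  have haddq := E.comp_add πq p q t h
  rw [hqq] at haddq
  have hqp0 : πq ≫ p = (E.ea _).zero := (E.ea _).one_max _ _ haddq
  rw [hqp0] at haddq
  have hqt : πq ≫ t = (E.ea (P.compObj q)).one := by
    have h01 : (E.ea (P.compObj q)).add (E.ea (P.compObj q)).zero (E.ea (P.compObj q)).one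
        = some (E.ea (P.compObj q)).one :=
      ((E.ea (P.compObj q)).add_comm' _ _).trans ((E.ea (P.compObj q)).add_zero' _)
    exact (Option.some.inj (h01.symm.trans haddq)).symm
  obtain ⟨hq', hhq', -⟩ := hπt.2 πq (by rw [hone_q, hqt])
  -- t is the image of its compression
  refine ⟨_, πt, hπt.1.symm, ?_⟩
  intro r hr
  have hpr : πp ≫ r = πp ≫ (E.ea A).one := by
    rw [hhp', Category.assoc, hr, Category.assoc]
  obtain ⟨w, hw⟩ := (isImage_of_compression hp hπp).2 r hpr
  have haddw := E.comp_add πq p w r hw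
  rw [hqp0] at haddw
  have hqw : πq ≫ w = πq ≫ r :=
    Option.some.inj ((((E.ea _).add_zero' _).symm).trans
      ((((E.ea _).add_comm' _ _)).trans haddw))
  have hqr : πq ≫ r = πq ≫ (E.ea A).one := by
    rw [hhq', Category.assoc, hr, Category.assoc]
  obtain ⟨v, hv⟩ := (isImage_of_compression hq hπq).2 w (hqw.trans hqr)
  obtain ⟨u, hu1, hu2⟩ :=
    (E.ea A).add_assoc' q v p w r hv (((E.ea A).add_comm' w p).trans hw)
  obtain ⟨w2, hw2, hw3⟩ :=
    (E.ea A).add_assoc' v p q u r hu1 (((E.ea A).add_comm' u q).trans hu2)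
  have hw2t : w2 = t := Option.some.inj (hw2.symm.trans h)
  exact ⟨v, ((E.ea A).add_comm' t v).trans (hw2t ▸ hw3)⟩

end Aux

/-- In a PET, if `p + q` is defined and both `p` and `p + q`
are sharp, then `q` is sharp. -/
theorem pet_sharp_of_sharp_add {C : Type u} [Category.{v} C] {E : EffectTheory C}
    (P : PET E) {A : C} (p q s : A ⟶ E.I) (hs : (E.ea A).add p q = some s)
    (hp : E.Sharp p) (hsum : E.Sharp s) :
    E.Sharp q := by
  set a := E.ea A
  have hcs : a.add s (a.compl s) = some a.one := a.compl_spec s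
  obtain ⟨w, hqs', hpw⟩ := a.add_assoc' p q (a.compl s) s a.one hs hcs
  obtain ⟨u, hs'p, hqu⟩ :=
    a.add_assoc' q (a.compl s) p w a.one hqs' ((a.add_comm' w p).trans hpw)
  have hu_sharp : E.Sharp u :=
    sharp_add_of_sharp P (a.compl s) p u hs'p (P.sharp_compl s hsum) hp
  have hcu : a.compl u = q :=
    a.compl_unique u _ q (a.compl_spec u) ((a.add_comm' u q).trans hqu)
  exact hcu ▸ P.sharp_compl u hu_sharp
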